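/- Let T be a finite tree (as a graph) with root r, let v₀,…,v_m be the vertices adjacent to r, and let T_i be the subtree consisting of r, v_i, and the descendants of v_i. If f: T → Y ⊆ (ℤ,c₁) is a shy map, then f is constant (with value f(r)) on all but at most two of the subtrees T_i. -/

import Mathlib

/-- A subset `A` is connected under adjacency `κ` if any two of its points are
joined by a path within `A` whose consecutive points are `κ`-adjacent. -/
def DConn {X : Type*} (κ : X → X → Prop) (A : Set X) : Prop :=
  ∀ a ∈ A, ∀ b ∈ A,
    Relation.ReflTransGen (fun u v => κ u v ∧ u ∈ A ∧ v ∈ A) a b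

/-- `f` is digitally continuous if images of connected sets are connected. -/
def DCont {X Y : Type*} (κ : X → X → Prop) (lam : Y → Y → Prop) (f : X → Y) : Prop :=
  ∀ A : Set X, DConn κ A → DConn lam (f '' A)

/-- `f` is shy: a continuous surjection with connected point preimages and
connected preimages of adjacent pairs. -/
def DShy {X Y : Type*} (κ : X → X → Prop) (lam : Y → Y → Prop) (f : X → Y) : Prop :=
  DCont κ lam f ∧ Function.Surjective f ∧
    (∀ y : Y, DConn κ (f ⁻¹' {y})) ∧
    ∀ y₀ y₁ : Y, lam y₀ y₁ → DConn κ (f ⁻¹' {y₀, y₁})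

/-- Shyness of `f` viewed as a map from the subset `S` onto the subset `T`. -/
def DShyOn {X Y : Type*} (κ : X → X → Prop) (lam : Y → Y → Prop)
    (f : X → Y) (S : Set X) (T : Set Y) : Prop :=
  (∀ s ∈ S, f s ∈ T) ∧
  (∀ A : Set X, A ⊆ S → DConn κ A → DConn lam (f '' A)) ∧
  (∀ t ∈ T, ∃ s ∈ S, f s = t) ∧
  (∀ y : Y, DConn κ (S ∩ f ⁻¹' {y})) ∧
  ∀ y₀ y₁ : Y, y₀ ∈ T → y₁ ∈ T → lam y₀ y₁ → DConn κ (S ∩ f ⁻¹' {y₀, y₁})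

/-- The `c₁`-adjacency on ℤ. -/
def c1 : ℤ → ℤ → Prop := fun a b => |a - b| = 1

section Aux
variable {V : Type*} {G : SimpleGraph V} {r : V}

/-- a walk avoiding r from a ReflTransGen chain avoiding r -/
lemma walk_avoiding {a b : V}
    (h : Relation.ReflTransGen (fun u w => G.Adj u w ∧ u ≠ r ∧ w ≠ r) a b)
    (ha : a ≠ r) : ∃ p : G.Walk a b, r ∉ p.support := by
  induction h with
  | refl => exact ⟨SimpleGraph.Walk.nil, by simp [Ne.symm ha]⟩
  | tail h1 hstep ih =>
    obtain ⟨p, hp⟩ := ih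
    refine ⟨p.concat hstep.1, ?_⟩
    rw [SimpleGraph.Walk.support_concat]
    simp only [List.concat_eq_append, List.mem_append, List.mem_singleton]
    rintro (h | h)
    · exact hp h
    · exact hstep.2.2 h.symm

lemma branch_meet (hT : G.IsTree) {v v' w : V}
    (hv : G.Adj r v) (hv' : G.Adj r v') (hne : v ≠ v')
    (h1 : Relation.ReflTransGen (fun a b => G.Adj a b ∧ a ≠ r ∧ b ≠ r) v w)
    (h2 : Relation.ReflTransGen (fun a b => G.Adj a b ∧ a ≠ r ∧ b ≠ r) v' w) :
    False := by
  classical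
  have hsymm : Symmetric (fun a b => G.Adj a b ∧ a ≠ r ∧ b ≠ r) :=
    fun a b h => ⟨h.1.symm, h.2.2, h.2.1⟩
  have h2' : Relation.ReflTransGen (fun a b => G.Adj a b ∧ a ≠ r ∧ b ≠ r) w v' := by
    haveI : Std.Symm (fun a b => G.Adj a b ∧ a ≠ r ∧ b ≠ r) := ⟨fun a b h => hsymm h⟩
    exact Std.Symm.symm _ _ h2
  have hvv' : Relation.ReflTransGen (fun a b => G.Adj a b ∧ a ≠ r ∧ b ≠ r) v v' :=
    h1.trans h2'
  obtain ⟨p, hp⟩ := walk_avoiding hvv' hv.ne'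
  have hq : (SimpleGraph.Walk.cons hv.symm
      (SimpleGraph.Walk.cons hv' SimpleGraph.Walk.nil) : G.Walk v v').IsPath := by
    simp [SimpleGraph.Walk.isPath_def, hv.ne', hv'.ne, hne]
  have huniq := hT.existsUnique_path v v'
  have := huniq.unique p.toPath.2 hq
  have hr : r ∈ (p.toPath : G.Walk v v').support := by
    rw [this]; simp
  exact hp (SimpleGraph.Walk.support_toPath_subset p hr)

lemma lip {Y : Set ℤ} {f : V → ℤ}
    (hshy : DShyOn G.Adj c1 f Set.univ Y) {u w : V} (h : G.Adj u w) :
    f u = f w ∨ |f u - f w| = 1 := by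
  by_cases he : f u = f w
  · exact Or.inl he
  right
  have hconn : DConn G.Adj ({u, w} : Set V) := by
    rintro a (rfl | rfl) b (rfl | rfl)
    · exact Relation.ReflTransGen.refl
    · exact Relation.ReflTransGen.single ⟨h, by simp, by simp⟩
    · exact Relation.ReflTransGen.single ⟨h.symm, by simp, by simp⟩
    · exact Relation.ReflTransGen.refl
  have himg := hshy.2.1 {u, w} (Set.subset_univ _) hconn
  have hu : f u ∈ f '' {u, w} := ⟨u, by simp⟩
  have hw : f w ∈ f '' {u, w} := ⟨w, by simp⟩
  have hchain := himg (f u) hu (f w) hw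
  rcases hchain.cases_tail with heq | ⟨x, _, hstep⟩
  · exact absurd heq.symm he
  · rcases hstep.2.1 with ⟨s, hs, rfl⟩
    rcases hs with rfl | rfl
    · exact hstep.1
    · exact absurd hstep.1 (by simp [c1])

lemma exists_pm {Y : Set ℤ} {f : V → ℤ}
    (hshy : DShyOn G.Adj c1 f Set.univ Y) {v x : V} (hrv : G.Adj r v)
    (hx : Relation.ReflTransGen (fun a b => G.Adj a b ∧ a ≠ r ∧ b ≠ r) v x) :
    f x ≠ f r → ∃ z, Relation.ReflTransGen (fun a b => G.Adj a b ∧ a ≠ r ∧ b ≠ r) v z ∧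
      (f z = f r + 1 ∨ f z = f r - 1) := by
  induction hx with
  | refl =>
    intro hfv
    refine ⟨v, Relation.ReflTransGen.refl, ?_⟩
    rcases lip hshy hrv with he | habs
    · exact absurd he.symm hfv
    · rcases abs_eq (by norm_num : (0:ℤ) ≤ 1) |>.1 habs with h | h <;> omega
  | @tail y x' h1 hstep ih =>
    intro hfx
    by_cases hfy : f y = f r
    · refine ⟨_, h1.tail hstep, ?_⟩
      rcases lip hshy hstep.1 with he | habs
      · rw [hfy] at he; exact absurd he.symm hfx
      · rw [hfy] at habs
        rcases abs_eq (by norm_num : (0:ℤ) ≤ 1) |>.1 habs with h | h <;> omega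
    · exact ih hfy

lemma main_case (hT : G.IsTree) {Y : Set ℤ} {f : V → ℤ}
    (hshy : DShyOn G.Adj c1 f Set.univ Y) {d : ℤ} (hd : d ≠ f r)
    {v v' z z' : V} (hv : G.Adj r v) (hv' : G.Adj r v') (hne : v ≠ v')
    (hz : Relation.ReflTransGen (fun a b => G.Adj a b ∧ a ≠ r ∧ b ≠ r) v z)
    (hfz : f z = d)
    (hz' : Relation.ReflTransGen (fun a b => G.Adj a b ∧ a ≠ r ∧ b ≠ r) v' z')
    (hfz' : f z' = d) : False := by
  have hA := hshy.2.2.2.1 d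
  have hzA : z ∈ Set.univ ∩ f ⁻¹' {d} := ⟨trivial, hfz⟩
  have hz'A : z' ∈ Set.univ ∩ f ⁻¹' {d} := ⟨trivial, hfz'⟩
  have hchain := hA z hzA z' hz'A
  have hmono : Relation.ReflTransGen (fun a b => G.Adj a b ∧ a ≠ r ∧ b ≠ r) z z' := by
    refine Relation.ReflTransGen.mono ?_ _ _ hchain
    rintro a b ⟨hab, ha, hb⟩
    refine ⟨hab, ?_, ?_⟩
    · rintro rfl; exact hd (ha.2.symm)
    · rintro rfl; exact hd (hb.2.symm)
  exact branch_meet hT hv hv' hne (hz.trans hmono) hz'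

end Aux

theorem shy_on_tree_constant_off_two_subtrees {V : Type*} [Fintype V]
    (G : SimpleGraph V) (hT : G.IsTree) (r : V)
    (Y : Set ℤ) (f : V → ℤ)
    (hshy : DShyOn G.Adj c1 f Set.univ Y) :
    ∃ v₁ v₂ : V, ∀ v : V, G.Adj r v → v ≠ v₁ → v ≠ v₂ →
      ∀ x ∈ insert r {w : V | w ≠ r ∧
        Relation.ReflTransGen (fun a b => G.Adj a b ∧ a ≠ r ∧ b ≠ r) v w},
      f x = f r := by
  classical
  have key : ∀ d : ℤ, d ≠ f r → ∃ v₀ : V, ∀ v, G.Adj r v → v ≠ v₀ → ∀ z,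
      Relation.ReflTransGen (fun a b => G.Adj a b ∧ a ≠ r ∧ b ≠ r) v z → f z ≠ d := by
    intro d hd
    by_cases hp : ∃ v, G.Adj r v ∧ ∃ z,
        Relation.ReflTransGen (fun a b => G.Adj a b ∧ a ≠ r ∧ b ≠ r) v z ∧ f z = d
    · obtain ⟨v₀, hadj, z₀, hc, hval⟩ := hp
      exact ⟨v₀, fun v hv hne z hz hfz =>
        main_case hT hshy hd hv hadj hne hz hfz hc hval⟩
    · exact ⟨r, fun v hv hne z hz hfz => hp ⟨v, hv, z, hz, hfz⟩⟩
  obtain ⟨v₁, h₁⟩ := key (f r + 1) (by omega)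
  obtain ⟨v₂, h₂⟩ := key (f r - 1) (by omega)
  refine ⟨v₁, v₂, fun v hv hv1 hv2 x hx => ?_⟩
  rcases hx with rfl | ⟨hxr, hchain⟩
  · rfl
  by_contra hfx
  obtain ⟨z, hzchain, hzval⟩ := exists_pm hshy hv hchain hfx
  rcases hzval with hzv | hzv
  · exact h₁ v hv hv1 z hzchain hzv
  · exact h₂ v hv hv2 z hzchain hzv
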